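/- Let H = η⁻¹ [diag(T 1_m), T_{−m}; (T_{−m})^T, diag((T_{−m})^T 1_n)] ∈ ℝ^{(n+m−1)×(n+m−1)} be the (reduced) dual Hessian matrix, where T_{−m} denotes T with its m-th column removed and 1_k denotes the all-ones vector in ℝ^k. Let Ω ⊆ {(i,j) : 1 ≤ i ≤ n, 1 ≤ j ≤ m−1} be a sparsification scheme containing the minimum set Ω* = {(i,j) : i = 1 or j = 1, 1 ≤ i ≤ n, 1 ≤ j ≤ m−1}, let T^Ω_{−m} be the n×(m−1) matrix whose (i,j) entry equals T_{ij} if (i,j) ∈ Ω and 0 otherwise, and let H_Ω = η⁻¹ [diag(T 1_m), T^Ω_{−m}; (T^Ω_{−m})^T, diag((T_{−m})^T 1_n)]. Then 0 < λ_min(H) ≤ λ_min(H_Ω) ≤ λ_max(H_Ω) ≤ λ_max(H), where λ_min(A) and λ_max(A) denote the smallest and largest eigenvalues of a symmetric matrix A. -/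

import Mathlib

open Matrix

lemma dotProduct_mulVec_eq_sum {k : Type*} [Fintype k] (A : Matrix k k ℝ) (x : k → ℝ) :
    x ⬝ᵥ (A *ᵥ x) = ∑ p, ∑ q, A p q * x p * x q := by
  simp only [dotProduct, Matrix.mulVec, Finset.mul_sum]
  exact Finset.sum_congr rfl fun p _ => Finset.sum_congr rfl fun q _ => by ring

lemma herm_quad_repr {k : Type*} [Fintype k] [DecidableEq k] {A : Matrix k k ℝ}
    (hA : A.IsHermitian) (x : k → ℝ) :
    ∃ y : k → ℝ, x ⬝ᵥ (A *ᵥ x) = ∑ i, hA.eigenvalues i * y i ^ 2 ∧ x ⬝ᵥ x = ∑ i, y i ^ 2 := by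
  classical
  set U : Matrix k k ℝ := (hA.eigenvectorUnitary : Matrix k k ℝ) with hUdef
  have hU : U * star U = 1 := mem_unitaryGroup_iff.mp hA.eigenvectorUnitary.2
  set y : k → ℝ := star U *ᵥ x with hydef
  have hy : x ᵥ* U = y := by
    funext j
    simp [hydef, Matrix.vecMul, Matrix.mulVec, dotProduct, mul_comm]
  have hdiag : Matrix.diagonal (RCLike.ofReal ∘ hA.eigenvalues) = Matrix.diagonal hA.eigenvalues := by
    ext i j; simp [Matrix.diagonal_apply]
  have h1 : x ⬝ᵥ (A *ᵥ x) = ∑ i, hA.eigenvalues i * y i ^ 2 := by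
    conv_lhs => rw [hA.spectral_theorem, Unitary.conjStarAlgAut_apply]
    rw [← Matrix.mulVec_mulVec, ← Matrix.mulVec_mulVec, Matrix.dotProduct_mulVec, hy, hdiag]
    simp only [Matrix.mulVec_diagonal, dotProduct]
    exact Finset.sum_congr rfl fun i _ => by ring
  have h2 : x ⬝ᵥ x = ∑ i, y i ^ 2 := by
    have : y ⬝ᵥ y = x ⬝ᵥ x := by
      rw [show y ⬝ᵥ y = (x ᵥ* U) ⬝ᵥ (star U *ᵥ x) from by rw [hy],
        ← Matrix.dotProduct_mulVec, Matrix.mulVec_mulVec, hU, Matrix.one_mulVec]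
    rw [← this]
    simp [dotProduct, sq]
  exact ⟨y, h1, h2⟩

lemma herm_quad_le {k : Type*} [Fintype k] [DecidableEq k] [Nonempty k] {A : Matrix k k ℝ}
    (hA : A.IsHermitian) (x : k → ℝ) :
    x ⬝ᵥ (A *ᵥ x) ≤ (⨆ i, hA.eigenvalues i) * (x ⬝ᵥ x) := by
  obtain ⟨y, h1, h2⟩ := herm_quad_repr hA x
  rw [h1, h2, Finset.mul_sum]
  exact Finset.sum_le_sum fun i _ => mul_le_mul_of_nonneg_right
    (le_ciSup (Set.Finite.bddAbove (Set.finite_range _)) i) (sq_nonneg _)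

lemma herm_quad_ge {k : Type*} [Fintype k] [DecidableEq k] [Nonempty k] {A : Matrix k k ℝ}
    (hA : A.IsHermitian) (x : k → ℝ) :
    (⨅ i, hA.eigenvalues i) * (x ⬝ᵥ x) ≤ x ⬝ᵥ (A *ᵥ x) := by
  obtain ⟨y, h1, h2⟩ := herm_quad_repr hA x
  rw [h1, h2, Finset.mul_sum]
  exact Finset.sum_le_sum fun i _ => mul_le_mul_of_nonneg_right
    (ciInf_le (Set.Finite.bddBelow (Set.finite_range _)) i) (sq_nonneg _)

lemma quad_blocks (n m : ℕ) (c : ℝ) (d : Fin n → ℝ) (e : Fin m → ℝ)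
    (B : Matrix (Fin n) (Fin m) ℝ) (u : Fin n → ℝ) (v : Fin m → ℝ) :
    (Sum.elim u v) ⬝ᵥ ((c • Matrix.fromBlocks (Matrix.diagonal d) B Bᵀ (Matrix.diagonal e)) *ᵥ (Sum.elim u v))
      = c * ((∑ i, d i * u i ^ 2) + (∑ j, e j * v j ^ 2) + 2 * ∑ i, ∑ j, B i j * u i * v j) := by
  rw [dotProduct_mulVec_eq_sum, Fintype.sum_sum_type]
  simp only [Fintype.sum_sum_type, Matrix.smul_apply, Matrix.fromBlocks_apply₁₁,
    Matrix.fromBlocks_apply₁₂, Matrix.fromBlocks_apply₂₁, Matrix.fromBlocks_apply₂₂,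
    smul_eq_mul, Matrix.transpose_apply, Matrix.diagonal_apply, Sum.elim_inl, Sum.elim_inr,
    ite_mul, zero_mul, mul_ite, mul_zero, Finset.sum_ite_eq, Finset.mem_univ, if_true,
    Finset.sum_add_distrib]
  have h3 : ∑ j : Fin m, ∑ i : Fin n, c * B i j * v j * u i
      = ∑ i : Fin n, ∑ j : Fin m, c * B i j * u i * v j := by
    rw [Finset.sum_comm]
    exact Finset.sum_congr rfl fun i _ => Finset.sum_congr rfl fun j _ => by ring
  have e1 : ∑ i : Fin n, c * d i * u i * u i = c * ∑ i, d i * u i ^ 2 := by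
    rw [Finset.mul_sum]; exact Finset.sum_congr rfl fun i _ => by ring
  have e2 : ∑ j : Fin m, c * e j * v j * v j = c * ∑ j, e j * v j ^ 2 := by
    rw [Finset.mul_sum]; exact Finset.sum_congr rfl fun j _ => by ring
  have e3 : ∑ i : Fin n, ∑ j : Fin m, c * B i j * u i * v j
      = c * ∑ i, ∑ j, B i j * u i * v j := by
    rw [Finset.mul_sum]
    refine Finset.sum_congr rfl fun i _ => ?_
    rw [Finset.mul_sum]; exact Finset.sum_congr rfl fun j _ => by ring
  rw [h3, e1, e2, e3]; ring

/-- The central double sum in the quadratic form of the (sparsified) Hessian. -/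
def Fq (n m : ℕ) (W B : Matrix (Fin n) (Fin m) ℝ) (u : Fin n → ℝ) (v : Fin m → ℝ) : ℝ :=
  ∑ i, ∑ j, (W i j * (u i ^ 2 + v j ^ 2) + 2 * B i j * u i * v j)

lemma Fq_split (n m : ℕ) (W B : Matrix (Fin n) (Fin m) ℝ) (u : Fin n → ℝ) (v : Fin m → ℝ) :
    Fq n m W B u v = (∑ i, ∑ j, W i j * u i ^ 2) + (∑ i, ∑ j, W i j * v j ^ 2)
      + ∑ i, ∑ j, 2 * B i j * u i * v j := by
  unfold Fq
  simp only [mul_add, Finset.sum_add_distrib]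

lemma Fq_le (n m : ℕ) (W B : Matrix (Fin n) (Fin m) ℝ) (hW : ∀ i j, 0 ≤ W i j)
    (hB : ∀ i j, B i j = W i j ∨ B i j = 0) (u : Fin n → ℝ) (v : Fin m → ℝ) :
    Fq n m W B u v ≤ Fq n m W W (fun i => |u i|) (fun j => |v j|) := by
  refine Finset.sum_le_sum fun i _ => Finset.sum_le_sum fun j _ => ?_
  have h1 := abs_mul (u i) (v j)
  have h2 := le_abs_self (u i * v j)
  have h3 := sq_abs (u i)
  have h4 := sq_abs (v j)
  have h5 := hW i j
  have h6 : 0 ≤ W i j * (|u i| * |v j|) :=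
    mul_nonneg h5 (mul_nonneg (abs_nonneg _) (abs_nonneg _))
  rcases hB i j with h | h <;> rw [h] <;> dsimp only <;> nlinarith

lemma Fq_ge (n m : ℕ) (W B : Matrix (Fin n) (Fin m) ℝ) (hW : ∀ i j, 0 ≤ W i j)
    (hB : ∀ i j, B i j = W i j ∨ B i j = 0) (u : Fin n → ℝ) (v : Fin m → ℝ) :
    Fq n m W W (fun i => |u i|) (fun j => -|v j|) ≤ Fq n m W B u v := by
  refine Finset.sum_le_sum fun i _ => Finset.sum_le_sum fun j _ => ?_
  have h1 := abs_mul (u i) (v j)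
  have h2 := neg_abs_le (u i * v j)
  have h3 := sq_abs (u i)
  have h4 := sq_abs (v j)
  have h5 := hW i j
  have h6 : 0 ≤ W i j * (|u i| * |v j|) :=
    mul_nonneg h5 (mul_nonneg (abs_nonneg _) (abs_nonneg _))
  rcases hB i j with h | h <;> rw [h] <;> dsimp only <;> nlinarith

lemma Fq_self_nonneg (n m : ℕ) (W : Matrix (Fin n) (Fin m) ℝ) (hW : ∀ i j, 0 ≤ W i j)
    (u : Fin n → ℝ) (v : Fin m → ℝ) : 0 ≤ Fq n m W W u v := by
  refine Finset.sum_nonneg fun i _ => Finset.sum_nonneg fun j _ => ?_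
  have : W i j * (u i ^ 2 + v j ^ 2) + 2 * W i j * u i * v j = W i j * (u i + v j) ^ 2 := by ring
  rw [this]
  exact mul_nonneg (hW i j) (sq_nonneg _)

lemma dot_sum_elim (n m : ℕ) (a : Fin n → ℝ) (b : Fin m → ℝ) :
    Sum.elim a b ⬝ᵥ Sum.elim a b = (∑ i, a i ^ 2) + ∑ j, b j ^ 2 := by
  simp [dotProduct, Fintype.sum_sum_type, sq]

open Matrix in

/-- Sparsifying the reduced dual Hessian `H` to `H_Ω` (for any
sparsification scheme `Ω` containing `Ω* = {(i,j) : i = 1 or j = 1}`) does not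
expand the range of its eigenvalues:
`0 < λ_min(H) ≤ λ_min(H_Ω) ≤ λ_max(H_Ω) ≤ λ_max(H)`.
Here the full matrix has `m+1` columns (so that "m−1" in the paper corresponds to `m`),
`Tm` is `T` with its last column removed, and indices of `Ω` with first coordinate 0
correspond to "i = 1", etc. -/
theorem stmt0 (n m : ℕ) (hn : 1 ≤ n) (hm : 1 ≤ m)
    (M : Matrix (Fin n) (Fin (m + 1)) ℝ) (η : ℝ) (hη : 0 < η)
    (α : Fin n → ℝ) (β : Fin (m + 1) → ℝ)
    (T : Matrix (Fin n) (Fin (m + 1)) ℝ)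
    (hT : ∀ i j, T i j = Real.exp ((α i + β j - M i j) / η))
    (Tm : Matrix (Fin n) (Fin m) ℝ)
    (hTm : ∀ i j, Tm i j = T i (Fin.castSucc j))
    (Ω : Set (Fin n × Fin m))
    (hΩ : ∀ p : Fin n × Fin m, ((p.1 : ℕ) = 0 ∨ (p.2 : ℕ) = 0) → p ∈ Ω)
    (TΩ : Matrix (Fin n) (Fin m) ℝ)
    (hTΩin : ∀ i j, (i, j) ∈ Ω → TΩ i j = Tm i j)
    (hTΩout : ∀ i j, (i, j) ∉ Ω → TΩ i j = 0)
    (H HΩ : Matrix (Fin n ⊕ Fin m) (Fin n ⊕ Fin m) ℝ)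
    (hH : H = η⁻¹ • Matrix.fromBlocks
      (Matrix.diagonal fun i => ∑ j, T i j) Tm
      Tmᵀ (Matrix.diagonal fun j => ∑ i, Tm i j))
    (hHΩ : HΩ = η⁻¹ • Matrix.fromBlocks
      (Matrix.diagonal fun i => ∑ j, T i j) TΩ
      TΩᵀ (Matrix.diagonal fun j => ∑ i, Tm i j))
    (hHherm : H.IsHermitian) (hHΩherm : HΩ.IsHermitian) :
    0 < (⨅ i, hHherm.eigenvalues i) ∧
    (⨅ i, hHherm.eigenvalues i) ≤ (⨅ i, hHΩherm.eigenvalues i) ∧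
    (⨅ i, hHΩherm.eigenvalues i) ≤ (⨆ i, hHΩherm.eigenvalues i) ∧
    (⨆ i, hHΩherm.eigenvalues i) ≤ (⨆ i, hHherm.eigenvalues i) := by
  classical
  haveI : Nonempty (Fin n ⊕ Fin m) := ⟨Sum.inl ⟨0, hn⟩⟩
  have hW0 : ∀ i j, 0 < Tm i j := fun i j => by rw [hTm, hT]; exact Real.exp_pos _
  have hW0' : ∀ i j, 0 ≤ Tm i j := fun i j => (hW0 i j).le
  have hs0 : ∀ i, 0 < T i (Fin.last m) := fun i => by rw [hT]; exact Real.exp_pos _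
  have hη1 : 0 < (η⁻¹ : ℝ) := inv_pos.mpr hη
  have hBor : ∀ i j, TΩ i j = Tm i j ∨ TΩ i j = 0 := fun i j => by
    by_cases h : (i, j) ∈ Ω
    · exact Or.inl (hTΩin i j h)
    · exact Or.inr (hTΩout i j h)
  have hdsum : ∀ i, (∑ j, T i j) = (∑ j : Fin m, Tm i j) + T i (Fin.last m) := fun i => by
    rw [Fin.sum_univ_castSucc]
    congr 1
    exact Finset.sum_congr rfl fun j _ => (hTm i j).symm
  have hquad : ∀ (B : Matrix (Fin n) (Fin m) ℝ) (u : Fin n → ℝ) (v : Fin m → ℝ),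
      (Sum.elim u v) ⬝ᵥ ((η⁻¹ • Matrix.fromBlocks
        (Matrix.diagonal fun i => ∑ j, T i j) B Bᵀ
        (Matrix.diagonal fun j => ∑ i, Tm i j)) *ᵥ (Sum.elim u v))
      = η⁻¹ * (Fq n m Tm B u v + ∑ i, T i (Fin.last m) * u i ^ 2) := by
    intro B u v
    rw [quad_blocks]
    congr 1
    rw [Fq_split]
    have hRd : ∑ i, (∑ j, T i j) * u i ^ 2
        = (∑ i, ∑ j, Tm i j * u i ^ 2) + ∑ i, T i (Fin.last m) * u i ^ 2 := by
      rw [← Finset.sum_add_distrib]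
      refine Finset.sum_congr rfl fun i _ => ?_
      rw [hdsum i, add_mul, Finset.sum_mul]
    have hRe : ∑ j, (∑ i, Tm i j) * v j ^ 2 = ∑ i, ∑ j, Tm i j * v j ^ 2 := by
      rw [Finset.sum_comm]
      exact Finset.sum_congr rfl fun j _ => Finset.sum_mul _ _ _
    have h2 : 2 * ∑ i, ∑ j, B i j * u i * v j = ∑ i, ∑ j, 2 * B i j * u i * v j := by
      rw [Finset.mul_sum]
      refine Finset.sum_congr rfl fun i _ => ?_
      rw [Finset.mul_sum]
      exact Finset.sum_congr rfl fun j _ => by ring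
    rw [hRd, hRe, h2]
    ring
  have hqH : ∀ u v, (Sum.elim u v) ⬝ᵥ (H *ᵥ Sum.elim u v)
      = η⁻¹ * (Fq n m Tm Tm u v + ∑ i, T i (Fin.last m) * u i ^ 2) := by
    intro u v; rw [hH]; exact hquad Tm u v
  have hqHΩ : ∀ u v, (Sum.elim u v) ⬝ᵥ (HΩ *ᵥ Sum.elim u v)
      = η⁻¹ * (Fq n m Tm TΩ u v + ∑ i, T i (Fin.last m) * u i ^ 2) := by
    intro u v; rw [hHΩ]; exact hquad TΩ u v
  -- Positive definiteness of H
  have hpd : H.PosDef := by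
    refine posDef_iff_dotProduct_mulVec.mpr ⟨hHherm, fun x hx => ?_⟩
    have hstar : star x = x := funext fun p => star_trivial _
    set u : Fin n → ℝ := fun i => x (Sum.inl i) with hudef
    set v : Fin m → ℝ := fun j => x (Sum.inr j) with hvdef
    have hx' : Sum.elim u v = x := funext fun p => by cases p <;> rfl
    rw [hstar, ← hx', hqH u v]
    refine mul_pos hη1 ?_
    by_cases hu : ∀ i, u i = 0
    · have hvex : ∃ j, v j ≠ 0 := by
        by_contra hv
        push_neg at hv
        apply hx
        rw [← hx']
        funext p
        cases p with
        | inl i => exact hu i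
        | inr j => exact hv j
      obtain ⟨j0, hj0⟩ := hvex
      have hterm : ∀ i j, 0 ≤ Tm i j * (u i ^ 2 + v j ^ 2) + 2 * Tm i j * u i * v j := by
        intro i j
        have : Tm i j * (u i ^ 2 + v j ^ 2) + 2 * Tm i j * u i * v j
            = Tm i j * (u i + v j) ^ 2 := by ring
        rw [this]
        exact mul_nonneg (hW0' i j) (sq_nonneg _)
      have hFpos : 0 < Fq n m Tm Tm u v := by
        unfold Fq
        refine Finset.sum_pos' (fun i _ => Finset.sum_nonneg fun j _ => hterm i j)
          ⟨⟨0, hn⟩, Finset.mem_univ _, ?_⟩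
        refine Finset.sum_pos' (fun j _ => hterm _ j) ⟨j0, Finset.mem_univ _, ?_⟩
        have heq : Tm ⟨0, hn⟩ j0 * (u ⟨0, hn⟩ ^ 2 + v j0 ^ 2)
            + 2 * Tm ⟨0, hn⟩ j0 * u ⟨0, hn⟩ * v j0
            = Tm ⟨0, hn⟩ j0 * (u ⟨0, hn⟩ + v j0) ^ 2 := by ring
        rw [heq, hu ⟨0, hn⟩, zero_add]
        exact mul_pos (hW0 _ _) (sq_pos_of_ne_zero hj0)
      have h2 : 0 ≤ ∑ i, T i (Fin.last m) * u i ^ 2 :=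
        Finset.sum_nonneg fun i _ => mul_nonneg (hs0 i).le (sq_nonneg _)
      linarith
    · push_neg at hu
      obtain ⟨i0, hi0⟩ := hu
      have h1 : 0 ≤ Fq n m Tm Tm u v := Fq_self_nonneg n m Tm hW0' u v
      have h2 : 0 < ∑ i, T i (Fin.last m) * u i ^ 2 :=
        Finset.sum_pos' (fun i _ => mul_nonneg (hs0 i).le (sq_nonneg _))
          ⟨i0, Finset.mem_univ _, mul_pos (hs0 i0) (sq_pos_of_ne_zero hi0)⟩
      linarith
  have heigpos : ∀ p, 0 < hHherm.eigenvalues p := fun p => hpd.eigenvalues_pos p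
  refine ⟨?_, ?_, ?_, ?_⟩
  · obtain ⟨p, hp⟩ := exists_eq_ciInf_of_finite (f := hHherm.eigenvalues)
    rw [← hp]
    exact heigpos p
  · -- λ_min(H) ≤ λ_min(HΩ)
    obtain ⟨i₀, hi₀⟩ := exists_eq_ciInf_of_finite (f := hHΩherm.eigenvalues)
    rw [← hi₀]
    set x : (Fin n ⊕ Fin m) → ℝ := ⇑(hHΩherm.eigenvectorBasis i₀) with hxdef
    have hxx : x ⬝ᵥ x = 1 := by
      have hnorm : ‖hHΩherm.eigenvectorBasis i₀‖ = 1 :=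
        hHΩherm.eigenvectorBasis.orthonormal.1 i₀
      have hinner : (inner ℝ (hHΩherm.eigenvectorBasis i₀) (hHΩherm.eigenvectorBasis i₀) : ℝ) = 1 := by
        rw [real_inner_self_eq_norm_sq, hnorm]; norm_num
      rw [← hinner]
      simp only [PiLp.inner_apply, RCLike.inner_apply, conj_trivial, dotProduct, hxdef]
    have hmv : HΩ *ᵥ x = hHΩherm.eigenvalues i₀ • x := hHΩherm.mulVec_eigenvectorBasis i₀
    have hxq : x ⬝ᵥ (HΩ *ᵥ x) = hHΩherm.eigenvalues i₀ := by
      rw [hmv, dotProduct_smul, smul_eq_mul, hxx, mul_one]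
    set u : Fin n → ℝ := fun i => x (Sum.inl i) with hudef
    set v : Fin m → ℝ := fun j => x (Sum.inr j) with hvdef
    have hx' : Sum.elim u v = x := funext fun p => by cases p <;> rfl
    set z : (Fin n ⊕ Fin m) → ℝ := Sum.elim (fun i => |u i|) (fun j => -|v j|) with hzdef
    have hzz : z ⬝ᵥ z = 1 := by
      rw [hzdef, dot_sum_elim, ← hxx, ← hx', dot_sum_elim]
      congr 1
      · exact Finset.sum_congr rfl fun i _ => by simp [sq_abs]
      · exact Finset.sum_congr rfl fun j _ => by simp [sq_abs]
    have habs : ∑ i, T i (Fin.last m) * |u i| ^ 2 = ∑ i, T i (Fin.last m) * u i ^ 2 :=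
      Finset.sum_congr rfl fun i _ => by rw [sq_abs]
    calc ⨅ p, hHherm.eigenvalues p
        = (⨅ p, hHherm.eigenvalues p) * (z ⬝ᵥ z) := by rw [hzz, mul_one]
      _ ≤ z ⬝ᵥ (H *ᵥ z) := herm_quad_ge hHherm z
      _ = η⁻¹ * (Fq n m Tm Tm (fun i => |u i|) (fun j => -|v j|)
            + ∑ i, T i (Fin.last m) * |u i| ^ 2) := hqH _ _
      _ ≤ η⁻¹ * (Fq n m Tm TΩ u v + ∑ i, T i (Fin.last m) * u i ^ 2) := by
          refine mul_le_mul_of_nonneg_left ?_ hη1.le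
          have hge := Fq_ge n m Tm TΩ hW0' hBor u v
          linarith
      _ = x ⬝ᵥ (HΩ *ᵥ x) := by rw [← hx', hqHΩ u v]
      _ = hHΩherm.eigenvalues i₀ := hxq
  · obtain ⟨p, -⟩ := exists_eq_ciInf_of_finite (f := hHΩherm.eigenvalues)
    exact le_trans (ciInf_le (Set.Finite.bddBelow (Set.finite_range _)) p)
      (le_ciSup (Set.Finite.bddAbove (Set.finite_range _)) p)
  · -- λ_max(HΩ) ≤ λ_max(H)
    obtain ⟨i₀, hi₀⟩ := exists_eq_ciSup_of_finite (f := hHΩherm.eigenvalues)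
    rw [← hi₀]
    set x : (Fin n ⊕ Fin m) → ℝ := ⇑(hHΩherm.eigenvectorBasis i₀) with hxdef
    have hxx : x ⬝ᵥ x = 1 := by
      have hnorm : ‖hHΩherm.eigenvectorBasis i₀‖ = 1 :=
        hHΩherm.eigenvectorBasis.orthonormal.1 i₀
      have hinner : (inner ℝ (hHΩherm.eigenvectorBasis i₀) (hHΩherm.eigenvectorBasis i₀) : ℝ) = 1 := by
        rw [real_inner_self_eq_norm_sq, hnorm]; norm_num
      rw [← hinner]
      simp only [PiLp.inner_apply, RCLike.inner_apply, conj_trivial, dotProduct, hxdef]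
    have hmv : HΩ *ᵥ x = hHΩherm.eigenvalues i₀ • x := hHΩherm.mulVec_eigenvectorBasis i₀
    have hxq : x ⬝ᵥ (HΩ *ᵥ x) = hHΩherm.eigenvalues i₀ := by
      rw [hmv, dotProduct_smul, smul_eq_mul, hxx, mul_one]
    set u : Fin n → ℝ := fun i => x (Sum.inl i) with hudef
    set v : Fin m → ℝ := fun j => x (Sum.inr j) with hvdef
    have hx' : Sum.elim u v = x := funext fun p => by cases p <;> rfl
    set y : (Fin n ⊕ Fin m) → ℝ := Sum.elim (fun i => |u i|) (fun j => |v j|) with hydef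
    have hyy : y ⬝ᵥ y = 1 := by
      rw [hydef, dot_sum_elim, ← hxx, ← hx', dot_sum_elim]
      congr 1
      · exact Finset.sum_congr rfl fun i _ => by simp [sq_abs]
      · exact Finset.sum_congr rfl fun j _ => by simp [sq_abs]
    have habs : ∑ i, T i (Fin.last m) * |u i| ^ 2 = ∑ i, T i (Fin.last m) * u i ^ 2 :=
      Finset.sum_congr rfl fun i _ => by rw [sq_abs]
    calc hHΩherm.eigenvalues i₀
        = x ⬝ᵥ (HΩ *ᵥ x) := hxq.symm
      _ = η⁻¹ * (Fq n m Tm TΩ u v + ∑ i, T i (Fin.last m) * u i ^ 2) := by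
          rw [← hx', hqHΩ u v]
      _ ≤ η⁻¹ * (Fq n m Tm Tm (fun i => |u i|) (fun j => |v j|)
            + ∑ i, T i (Fin.last m) * |u i| ^ 2) := by
          refine mul_le_mul_of_nonneg_left ?_ hη1.le
          have hle := Fq_le n m Tm TΩ hW0' hBor u v
          linarith
      _ = y ⬝ᵥ (H *ᵥ y) := (hqH _ _).symm
      _ ≤ (⨆ p, hHherm.eigenvalues p) * (y ⬝ᵥ y) := herm_quad_le hHherm y
      _ = ⨆ p, hHherm.eigenvalues p := by rw [hyy, mul_one]
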